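/- The extended q-binomial coefficients are uniquely determined by the two q-Pascal identities [n m]⁺ = q^m [n−1, m]⁺ + [n−1, m−1]⁺ and [n m]⁺ = [n−1, m]⁺ + q^{n−m} [n−1, m−1]⁺ (valid for all integers n, m), together with the boundary conditions [m m]⁺ = 1 for all m ∈ ℤ and [n 0]⁺ = 0 for all n < 0. That is, any doubly indexed family of Laurent polynomials P(n,m) ∈ ℤ[q,q⁻¹] satisfying both Pascal identities for all integers n, m and these boundary conditions must coincide with the extended q-binomial coefficients. -/

import Mathlib

noncomputable section
open LaurentPolynomial

def gaussRec (v : LaurentPolynomial ℤ) : ℕ → ℕ → LaurentPolynomial ℤ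
  | 0, 0 => 1
  | 0, _ + 1 => 0
  | _ + 1, 0 => 1
  | n + 1, m + 1 => gaussRec v n (m + 1) * v ^ (m + 1) + gaussRec v n m

/-- `[n m]_v` for integer indices: the Gaussian binomial in the variable `v`,
zero unless `0 ≤ m ≤ n`. -/
def gaussZ (v : LaurentPolynomial ℤ) (n m : ℤ) : LaurentPolynomial ℤ :=
  if 0 ≤ m ∧ m ≤ n then gaussRec v n.toNat m.toNat else 0

/-- The Gaussian binomial coefficient `[n m]_q` as a Laurent polynomial in `q = T 1`. -/
def qbin (n m : ℤ) : LaurentPolynomial ℤ := gaussZ (T 1) n m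

/-- The extended q-binomial coefficient `[n m]⁺_q ∈ ℤ[q,q⁻¹]`. -/
def qbinPlus (n m : ℤ) : LaurentPolynomial ℤ :=
  if 0 ≤ n then qbin n m
  else (-1) ^ (n - m).natAbs * T (-(((n - m) ^ 2 + (n - m)) / 2)) *
    gaussZ (T (-1)) (-m - 1) (-n - 1)


lemma gaussRec_zero_of_lt (v : LaurentPolynomial ℤ) : ∀ n m : ℕ, n < m → gaussRec v n m = 0
  | 0, _ + 1, _ => rfl
  | n + 1, m + 1, h => by
    rw [gaussRec, gaussRec_zero_of_lt v n (m+1) (by omega),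
      gaussRec_zero_of_lt v n m (by omega)]
    ring

lemma gaussRec_self (v : LaurentPolynomial ℤ) : ∀ n : ℕ, gaussRec v n n = 1
  | 0 => rfl
  | n + 1 => by
    rw [gaussRec, gaussRec_zero_of_lt v n (n+1) (by omega), gaussRec_self v n]
    ring

lemma gaussRec_zero_right (v : LaurentPolynomial ℤ) : ∀ n : ℕ, gaussRec v n 0 = 1
  | 0 => rfl
  | _ + 1 => rfl

lemma gaussL1 (v : LaurentPolynomial ℤ) (n : ℕ) : ∀ m : ℕ, m ≤ n →
    (v ^ (m+1) - 1) * gaussRec v n (m+1) = (v ^ (n-m) - 1) * gaussRec v n m := by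
  induction n with
  | zero =>
    intro m hm
    interval_cases m
    simp [gaussRec]
  | succ n IH =>
    intro m hm
    match m with
    | 0 =>
      have IH0 := IH 0 (Nat.zero_le n)
      simp only [Nat.sub_zero] at IH0 ⊢
      rw [show gaussRec v (n+1) 1 = gaussRec v n 1 * v ^ 1 + gaussRec v n 0 from rfl,
        gaussRec_zero_right, gaussRec_zero_right]
      rw [gaussRec_zero_right] at IH0
      linear_combination v * IH0
    | m' + 1 =>
      by_cases hmn : m' = n
      · subst hmn
        rw [gaussRec_zero_of_lt v (m'+1) (m'+2) (by omega),
          show m' + 1 - (m' + 1) = 0 from by omega]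
        ring
      · have h1 : m' + 1 ≤ n := by omega
        obtain ⟨k, rfl⟩ : ∃ k, n = m' + 1 + k := ⟨n - (m'+1), by omega⟩
        have IH1 := IH (m'+1) (by omega)
        have IH2 := IH m' (by omega)
        rw [show m' + 1 + k - (m'+1) = k from by omega] at IH1
        rw [show m' + 1 + k - m' = k + 1 from by omega] at IH2
        rw [show m' + 1 + k + 1 - (m'+1) = k + 1 from by omega]
        rw [show gaussRec v (m'+1+k+1) (m'+1+1) =
          gaussRec v (m'+1+k) (m'+1+1) * v ^ (m'+1+1) + gaussRec v (m'+1+k) (m'+1) from rfl]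
        rw [show gaussRec v (m'+1+k+1) (m'+1) =
          gaussRec v (m'+1+k) (m'+1) * v ^ (m'+1) + gaussRec v (m'+1+k) m' from rfl]
        linear_combination v ^ (m'+2) * IH1 + IH2

lemma gaussL2 (v : LaurentPolynomial ℤ) (n m : ℕ) (h : m ≤ n + 1) :
    (v ^ (n+1-m) - 1) * gaussRec v (n+1) m = (v ^ (n+1) - 1) * gaussRec v n m := by
  match m with
  | 0 => rw [gaussRec_zero_right, gaussRec_zero_right]; norm_num
  | m' + 1 =>
    have hm : m' ≤ n := by omega
    obtain ⟨k, rfl⟩ : ∃ k, n = m' + k := ⟨n - m', by omega⟩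
    have hL := gaussL1 v (m'+k) m' (by omega)
    rw [show m' + k - m' = k from by omega] at hL
    rw [show m' + k + 1 - (m'+1) = k from by omega]
    rw [show gaussRec v (m'+k+1) (m'+1) =
      gaussRec v (m'+k) (m'+1) * v ^ (m'+1) + gaussRec v (m'+k) m' from rfl]
    linear_combination -hL

lemma T_ne_one {k : ℤ} (h : k ≠ 0) : (T k : LaurentPolynomial ℤ) ≠ 1 := by
  intro hh
  have : Finsupp.single k (1:ℤ) = Finsupp.single 0 1 := congrArg AddMonoidAlgebra.coeff hh
  rw [Finsupp.single_eq_single_iff] at this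
  simp at this
  omega

lemma qbinPlus_diag (m : ℤ) : qbinPlus m m = 1 := by
  rcases le_or_gt 0 m with h | h
  · rw [qbinPlus, if_pos h, qbin, gaussZ, if_pos ⟨h, le_refl m⟩, gaussRec_self]
  · rw [qbinPlus, if_neg (by omega), gaussZ, if_pos ⟨by omega, le_refl (-m-1)⟩,
      gaussRec_self]
    simp

lemma qbinPlus_zero {n : ℤ} (h : n < 0) : qbinPlus n 0 = 0 := by
  rw [qbinPlus, if_neg (by omega), gaussZ, if_neg (by omega)]
  ring

lemma gaussZ_eq_zero {v : LaurentPolynomial ℤ} {n m : ℤ} (h : ¬(0 ≤ m ∧ m ≤ n)) :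
    gaussZ v n m = 0 := if_neg h

lemma gaussZ_eq {v : LaurentPolynomial ℤ} {n m : ℤ} (h : 0 ≤ m ∧ m ≤ n) :
    gaussZ v n m = gaussRec v n.toNat m.toNat := if_pos h

lemma qbinPlus_rel (n m : ℤ) :
    (T m - 1) * qbinPlus n m = (T (n+1-m) - 1) * qbinPlus n (m-1) := by
  rcases le_or_gt 0 n with hn | hn
  · rw [qbinPlus, if_pos hn, qbinPlus, if_pos hn, qbin, qbin]
    rcases lt_trichotomy m 0 with hm | hm | hm
    · rw [gaussZ_eq_zero (by omega), gaussZ_eq_zero (by omega)]; ring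
    · subst hm
      rw [gaussZ_eq_zero (show ¬((0:ℤ) ≤ 0-1 ∧ (0:ℤ)-1 ≤ n) from by omega), T_zero]
      ring
    · rcases lt_trichotomy m (n+1) with hm2 | hm2 | hm2
      · -- 1 ≤ m ≤ n
        rw [gaussZ_eq ⟨by omega, by omega⟩, gaussZ_eq ⟨by omega, by omega⟩]
        have key := gaussL1 (T 1) n.toNat (m.toNat - 1) (by omega)
        simp only [T_pow, mul_one] at key
        rw [show ((m.toNat - 1 + 1 : ℕ) : ℤ) = m from by omega,
          show ((n.toNat - (m.toNat - 1) : ℕ) : ℤ) = n+1-m from by omega,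
          show m.toNat - 1 + 1 = m.toNat from by omega] at key
        rw [show (m-1).toNat = m.toNat - 1 from by omega]
        exact key
      · rw [gaussZ_eq_zero (by omega), show n+1-m = 0 from by omega, T_zero]; ring
      · rw [gaussZ_eq_zero (by omega), gaussZ_eq_zero (by omega)]; ring
  · rw [qbinPlus, if_neg (by omega), qbinPlus, if_neg (by omega)]
    rcases lt_or_ge n m with hm | hm
    · rcases eq_or_lt_of_le (show n+1 ≤ m from hm) with hm2 | hm2
      · rw [gaussZ_eq_zero (by omega), show n+1-m = 0 from by omega, T_zero]; ring
      · rw [gaussZ_eq_zero (by omega), gaussZ_eq_zero (by omega)]; ring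
    · -- m ≤ n < 0, the main negative case
      rw [gaussZ_eq ⟨by omega, by omega⟩, gaussZ_eq ⟨by omega, by omega⟩]
      rw [show n - (m-1) = n - m + 1 from by ring]
      rw [show (n-m+1).natAbs = (n-m).natAbs + 1 from by omega,
        show ((-1 : LaurentPolynomial ℤ))^((n-m).natAbs + 1)
          = (-1)^(n-m).natAbs * (-1) from pow_succ _ _]
      have E : -(((n-m+1)^2 + (n-m+1))/2) = -(((n-m)^2 + (n-m))/2) + -(n+1-m) := by
        have h2 : (n-m+1)^2 + (n-m+1) = ((n-m)^2 + (n-m)) + (n+1-m)*2 := by ring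
        rw [h2, Int.add_mul_ediv_right _ _ (by norm_num : (2:ℤ) ≠ 0)]
        ring
      rw [E, T_add]
      rw [show (-(m-1)-1).toNat = (-m-1).toNat + 1 from by omega]
      have key := gaussL2 (T (-1)) ((-m-1).toNat) ((-n-1).toNat) (by omega)
      simp only [T_pow, mul_neg_one] at key
      rw [show -(((-m-1).toNat + 1 - (-n-1).toNat : ℕ) : ℤ) = -(n+1-m) from by omega,
        show -(((-m-1).toNat + 1 : ℕ) : ℤ) = m from by omega] at key
      have hk : T (n+1-m) * T (-(n+1-m)) = (1 : LaurentPolynomial ℤ) := by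
        rw [← T_add]; simp
      generalize hT : (T (-(((n - m) ^ 2 + (n - m)) / 2)) : LaurentPolynomial ℤ) = t
      generalize hS : ((-1 : LaurentPolynomial ℤ))^(n-m).natAbs = s
      linear_combination (-(s * t)) * key +
        (s * t * gaussRec (T (-1)) ((-m-1).toNat + 1) ((-n-1).toNat)) * hk

/-- the two q-Pascal identities and the boundary conditions uniquely
determine the extended q-binomial coefficients. -/
theorem qbinPlus_unique (P : ℤ → ℤ → LaurentPolynomial ℤ)
    (h1 : ∀ n m : ℤ, P n m = T m * P (n - 1) m + P (n - 1) (m - 1))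
    (h2 : ∀ n m : ℤ, P n m = P (n - 1) m + T (n - m) * P (n - 1) (m - 1))
    (hdiag : ∀ m : ℤ, P m m = 1)
    (hzero : ∀ n : ℤ, n < 0 → P n 0 = 0) :
    ∀ n m : ℤ, P n m = qbinPlus n m := by
  set D : ℤ → ℤ → LaurentPolynomial ℤ := fun n m => P n m - qbinPlus n m with hDdef
  have hR : ∀ n m : ℤ, (T m - 1) * P n m = (T (n+1-m) - 1) * P n (m-1) := by
    intro n m
    have a1 := h1 (n+1) m
    have a2 := h2 (n+1) m
    rw [show n+1-1 = n from by ring] at a1 a2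
    rw [show n+1-m = n+1-m from rfl]
    linear_combination a2 - a1
  have hD : ∀ n m : ℤ, (T m - 1) * D n m = (T (n+1-m) - 1) * D n (m-1) := by
    intro n m
    simp only [hDdef]
    linear_combination hR n m - qbinPlus_rel n m
  have cancel : ∀ (k : ℤ) (x : LaurentPolynomial ℤ), k ≠ 0 → (T k - 1) * x = 0 → x = 0 := by
    intro k x hk h
    rcases mul_eq_zero.mp h with h' | h'
    · exact absurd (sub_eq_zero.mp h') (T_ne_one hk)
    · exact h'
  have step_down : ∀ n m : ℤ, D n m = 0 → n + 1 - m ≠ 0 → D n (m-1) = 0 := by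
    intro n m h0 hne
    refine cancel _ _ hne ?_
    rw [← hD n m, h0, mul_zero]
  have step_up : ∀ n m : ℤ, D n (m-1) = 0 → m ≠ 0 → D n m = 0 := by
    intro n m h0 hne
    refine cancel _ _ hne ?_
    rw [hD n m, h0, mul_zero]
  have hdiag0 : ∀ n : ℤ, D n n = 0 := by
    intro n
    simp only [hDdef, hdiag n, qbinPlus_diag n, sub_self]
  have P1 : ∀ (k : ℕ) (n : ℤ), D n (n - k) = 0 := by
    intro k
    induction k with
    | zero => intro n; simpa using hdiag0 n
    | succ k IH =>
      intro n
      have := step_down n (n - k) (IH n) (by omega)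
      rw [show n - (k:ℤ) - 1 = n - ((k:ℕ)+1 : ℕ) from by push_cast; ring] at this
      exact this
  have P3 : ∀ (n : ℤ), n < 0 → ∀ (k : ℕ), D n k = 0 := by
    intro n hn k
    induction k with
    | zero =>
      simp only [hDdef, Nat.cast_zero, hzero n hn, qbinPlus_zero hn, sub_self]
    | succ k IH =>
      have := step_up n (k+1 : ℕ) (by rw [show ((k+1 : ℕ) : ℤ) - 1 = (k : ℤ) from by push_cast; ring]; exact IH) (by omega)
      exact this
  have P2 : ∀ (n : ℤ), 0 ≤ n → ∀ (k : ℕ), D n (n + k) = 0 := by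
    intro n hn k
    induction k with
    | zero => simpa using hdiag0 n
    | succ k IH =>
      have := step_up n (n + (k:ℤ) + 1) (by rw [show n + (k:ℤ) + 1 - 1 = n + k from by ring]; exact IH) (by omega)
      rw [show n + ((k+1 : ℕ) : ℤ) = n + (k:ℤ) + 1 from by push_cast; ring]
      exact this
  have P4 : ∀ (n : ℤ), n < 0 → ∀ (k : ℕ), (k : ℤ) ≤ -n-1 → D n (-k) = 0 := by
    intro n hn k
    induction k with
    | zero => intro _; simpa using P3 n hn 0
    | succ k IH =>
      intro hk
      have hk' : (k : ℤ) ≤ -n-1 := by push_cast at hk ⊢; omega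
      have := step_down n (-(k:ℤ)) (IH hk') (by push_cast at hk; omega)
      rw [show -(((k+1 : ℕ)) : ℤ) = -(k:ℤ) - 1 from by push_cast; ring]
      exact this
  intro n m
  have hzero' : D n m = 0 := by
    rcases le_or_gt 0 n with hn | hn
    · rcases le_or_gt m n with hm | hm
      · have := P1 (n - m).toNat n
        rw [show n - ((n-m).toNat : ℤ) = m from by omega] at this
        exact this
      · have := P2 n hn (m - n).toNat
        rw [show n + ((m-n).toNat : ℤ) = m from by omega] at this
        exact this
    · rcases le_or_gt m n with hm | hm
      · have := P1 (n - m).toNat n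
        rw [show n - ((n-m).toNat : ℤ) = m from by omega] at this
        exact this
      · rcases le_or_gt 0 m with hm2 | hm2
        · have := P3 n hn m.toNat
          rw [show ((m.toNat : ℤ)) = m from by omega] at this
          exact this
        · have := P4 n hn (-m).toNat (by omega)
          rw [show -(((-m).toNat : ℤ)) = m from by omega] at this
          exact this
  have := sub_eq_zero.mp (by simpa only [hDdef] using hzero')
  exact this
end
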